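/- Let G be a red/blue edge-colored graph avoiding handles and non-monochromatic triangles, and let v be a vertex of G. Form G' by adding a new vertex v' adjacent to exactly the neighbors of v, with each edge {v', x} given the same color as {v, x} (v and v' are not adjacent). Then G' also avoids handles and non-monochromatic triangles. -/

import Mathlib

/-- The graph obtained from `R` by cloning the vertex `v`: a new vertex (the `none` of
`Option V`) is adjacent to exactly the neighbors of `v`, and not to `v` itself. -/
def cloneAt {V : Type*} (R : SimpleGraph V) (v : V) : SimpleGraph (Option V) where
  Adj a b :=
    (∃ x y, a = some x ∧ b = some y ∧ R.Adj x y) ∨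
    (∃ x, a = some x ∧ b = none ∧ R.Adj x v) ∨
    (∃ y, a = none ∧ b = some y ∧ R.Adj v y)
  symm := by
    refine ⟨?_⟩
    rintro a b (⟨x, y, rfl, rfl, h⟩ | ⟨x, rfl, rfl, h⟩ | ⟨y, rfl, rfl, h⟩)
    · exact Or.inl ⟨y, x, rfl, rfl, h.symm⟩
    · exact Or.inr (Or.inr ⟨x, rfl, rfl, h.symm⟩)
    · exact Or.inr (Or.inl ⟨y, rfl, rfl, h.symm⟩)
  loopless := by
    refine ⟨?_⟩
    rintro a (⟨x, y, rfl, h1, h⟩ | ⟨x, rfl, h1, h⟩ | ⟨y, h1, rfl, h⟩)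
    · obtain rfl := Option.some.inj h1
      exact R.loopless.irrefl _ h
    · exact Option.some_ne_none _ h1
    · exact Option.some_ne_none _ h1

/-- A red/blue edge-colored graph `(R, B)` avoids handles and non-monochromatic
triangles. -/
def Avoids {V : Type*} (R B : SimpleGraph V) : Prop :=
  (∀ a b c : V, (R ⊔ B).Adj a b → (R ⊔ B).Adj b c → (R ⊔ B).Adj a c →
    (R.Adj a b ∧ R.Adj b c ∧ R.Adj a c) ∨ (B.Adj a b ∧ B.Adj b c ∧ B.Adj a c)) ∧
  (∀ a b c x : V, R.Adj a b → R.Adj b c → R.Adj a c → ¬ B.Adj a x) ∧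
  (∀ a b c x : V, B.Adj a b → B.Adj b c → B.Adj a c → ¬ R.Adj a x)


theorem cloneAt_adj_iff {V : Type*} (R : SimpleGraph V) (v : V) (a b : Option V) :
    (cloneAt R v).Adj a b ↔ (a ≠ none ∨ b ≠ none) ∧ R.Adj (a.getD v) (b.getD v) := by
  cases a <;> cases b <;>
    simp [cloneAt, SimpleGraph.irrefl]

/-- Cloning a vertex preserves the absence of handles and non-monochromatic triangles. -/
theorem stmt_5 {V : Type*} (R B : SimpleGraph V)
    (hdisj : ∀ x y : V, ¬ (R.Adj x y ∧ B.Adj x y))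
    (h : Avoids R B) (v : V) :
    Avoids (cloneAt R v) (cloneAt B v) := by
  obtain ⟨h1, h2, h3⟩ := h
  refine ⟨?_, ?_, ?_⟩
  · intro a b c hab hbc hac
    rw [SimpleGraph.sup_adj, cloneAt_adj_iff, cloneAt_adj_iff] at hab hbc hac
    have hab' : (a ≠ none ∨ b ≠ none) ∧ (R ⊔ B).Adj (a.getD v) (b.getD v) := by
      rcases hab with ⟨h4, h5⟩ | ⟨h4, h5⟩
      exacts [⟨h4, Or.inl h5⟩, ⟨h4, Or.inr h5⟩]
    have hbc' : (b ≠ none ∨ c ≠ none) ∧ (R ⊔ B).Adj (b.getD v) (c.getD v) := by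
      rcases hbc with ⟨h4, h5⟩ | ⟨h4, h5⟩
      exacts [⟨h4, Or.inl h5⟩, ⟨h4, Or.inr h5⟩]
    have hac' : (a ≠ none ∨ c ≠ none) ∧ (R ⊔ B).Adj (a.getD v) (c.getD v) := by
      rcases hac with ⟨h4, h5⟩ | ⟨h4, h5⟩
      exacts [⟨h4, Or.inl h5⟩, ⟨h4, Or.inr h5⟩]
    rcases h1 _ _ _ hab'.2 hbc'.2 hac'.2 with ⟨t1, t2, t3⟩ | ⟨t1, t2, t3⟩
    · exact Or.inl ⟨(cloneAt_adj_iff R v a b).2 ⟨hab'.1, t1⟩,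
        (cloneAt_adj_iff R v b c).2 ⟨hbc'.1, t2⟩,
        (cloneAt_adj_iff R v a c).2 ⟨hac'.1, t3⟩⟩
    · exact Or.inr ⟨(cloneAt_adj_iff B v a b).2 ⟨hab'.1, t1⟩,
        (cloneAt_adj_iff B v b c).2 ⟨hbc'.1, t2⟩,
        (cloneAt_adj_iff B v a c).2 ⟨hac'.1, t3⟩⟩
  · intro a b c x hab hbc hac hax
    rw [cloneAt_adj_iff] at hab hbc hac hax
    exact h2 _ _ _ _ hab.2 hbc.2 hac.2 hax.2
  · intro a b c x hab hbc hac hax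
    rw [cloneAt_adj_iff] at hab hbc hac hax
    exact h3 _ _ _ _ hab.2 hbc.2 hac.2 hax.2
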